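/- Theorem 1 recovers Globevnik's lemma: in the setting of the two-sided Schwarz inequality for F : 𝔻 → Ω_n, if W_1 = F(ζ_1) = 0, then d_1 = 1 and max{ max_{μ ∈ σ(W_2)} dist_ℳ(μ; σ(W_1))^{d_1}, max_{λ ∈ σ(W_1)} dist_ℳ(λ; σ(W_2))^{d_2} } = r(W_2), i.e. the left-hand side of the inequality equals the spectral radius of W_2; consequently r(W_2) ≤ |(ζ_1 − ζ_2)/(1 − conj(ζ_1)ζ_2)|. -/

import Mathlib

open Metric

open Polynomial

section Aux

-- L1: normSq identity
lemma L1 (a b : ℂ) : Complex.normSq (1 + (starRingEnd ℂ a) * b) - Complex.normSq (a + b)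
    = (1 - Complex.normSq a) * (1 - Complex.normSq b) := by
  simp only [Complex.normSq_apply, Complex.add_re, Complex.add_im, Complex.mul_re, Complex.mul_im,
    Complex.one_re, Complex.one_im, Complex.conj_re, Complex.conj_im]
  ring
lemma L2 {n : ℕ} (A : Matrix (Fin n) (Fin n) ℂ) (μ : ℂ) :
    μ ∈ spectrum ℂ A ↔ (Matrix.charpoly A).IsRoot μ := by
  rw [spectrum.mem_iff, Matrix.isUnit_iff_isUnit_det, isUnit_iff_ne_zero, not_not, IsRoot.def]
  rw [Matrix.charpoly, eval_det, Matrix.matPolyEquiv_charmatrix]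
  have : (Polynomial.eval (Matrix.scalar (Fin n) μ) (X - C A)) = algebraMap ℂ _ μ - A := by
    simp only [eval_sub, eval_X, eval_C]
    congr 1
  rw [this]
-- spectrum finite
lemma L3 {n : ℕ} [NeZero n] (A : Matrix (Fin n) (Fin n) ℂ) : (spectrum ℂ A).Finite := by
  have h : spectrum ℂ A ⊆ {x | (Matrix.charpoly A).IsRoot x} := fun x hx => (L2 A x).mp hx
  exact Set.Finite.subset (Polynomial.finite_setOf_isRoot (Matrix.charpoly_monic A).ne_zero) h

-- Lemma A : higher-order Schwarz via max modulus
lemma LA {h : ℂ → ℂ} (hd : DifferentiableOn ℂ h (ball (0:ℂ) 1)) (N : ℕ) (M : ℝ)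
    (hb : ∀ z ∈ ball (0:ℂ) 1, ‖z ^ N * h z‖ ≤ M) :
    ∀ z ∈ ball (0:ℂ) 1, ‖h z‖ ≤ M := by
  intro z₀ hz₀
  rw [mem_ball_zero_iff] at hz₀
  have key : ∀ s ∈ Set.Ioo (max ‖z₀‖ (1/2)) 1, ‖h z₀‖ ≤ M / s ^ N := by
    intro s hs
    obtain ⟨hs1, hs2⟩ := hs
    have hzs : ‖z₀‖ < s := lt_of_le_of_lt (le_max_left _ _) hs1
    have hs0 : (0:ℝ) < s := lt_of_le_of_lt (by norm_num) (lt_of_le_of_lt (le_max_right _ _) hs1)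
    have hsub : closedBall (0:ℂ) s ⊆ ball (0:ℂ) 1 := closedBall_subset_ball hs2
    have hcl : DiffContOnCl ℂ h (ball (0:ℂ) s) := by
      apply DifferentiableOn.diffContOnCl
      rw [closure_ball (0:ℂ) hs0.ne']
      exact hd.mono hsub
    apply Complex.norm_le_of_forall_mem_frontier_norm_le isBounded_ball hcl
      (C := M / s ^ N)
    · intro z hz
      rw [frontier_ball (0:ℂ) hs0.ne'] at hz
      have hzn : ‖z‖ = s := by simpa [mem_sphere_iff_norm] using hz
      have hzb : z ∈ ball (0:ℂ) 1 := by rw [mem_ball_zero_iff, hzn]; exact hs2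
      have := hb z hzb
      rw [norm_mul, norm_pow, hzn] at this
      rw [le_div_iff₀ (by positivity)]
      linarith [this]
    · rw [closure_ball (0:ℂ) hs0.ne']
      exact mem_closedBall_zero_iff.mpr hzs.le
  have hne : Set.Ioo (max ‖z₀‖ (1/2)) 1 ∈ nhdsWithin (1:ℝ) (Set.Iio 1) := by
    apply Ioo_mem_nhdsLT_of_mem
    constructor
    · simp only [max_lt_iff]; exact ⟨hz₀, by norm_num⟩
    · exact le_refl 1
  have htend : Filter.Tendsto (fun s : ℝ => M / s ^ N) (nhdsWithin (1:ℝ) (Set.Iio 1)) (nhds M) := by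
    have : Filter.Tendsto (fun s : ℝ => M / s ^ N) (nhds (1:ℝ)) (nhds (M / 1 ^ N)) := by
      apply Filter.Tendsto.div tendsto_const_nhds
      · exact (continuous_pow N).continuousAt
      · norm_num
    simpa using this.mono_left nhdsWithin_le_nhds
  exact ge_of_tendsto htend (Filter.eventually_iff_exists_mem.mpr ⟨_, hne, key⟩)

-- coeff of finset prod differentiability
lemma LD1 {s : Set ℂ} {ι : Type*} [DecidableEq ι] (t : Finset ι) (P : ι → ℂ → Polynomial ℂ)
    (hP : ∀ i ∈ t, ∀ k, DifferentiableOn ℂ (fun z => (P i z).coeff k) s) :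
    ∀ k, DifferentiableOn ℂ (fun z => (∏ i ∈ t, P i z).coeff k) s := by
  induction t using Finset.induction_on with
  | empty => intro k; simp only [Finset.prod_empty, coeff_one]; exact differentiableOn_const _
  | insert a t' hnot ih =>
    intro k
    have : (fun z => (∏ i ∈ insert a t', P i z).coeff k)
        = fun z => ∑ x ∈ Finset.HasAntidiagonal.antidiagonal k, (P a z).coeff x.1 * (∏ i ∈ t', P i z).coeff x.2 := by
      funext z
      rw [Finset.prod_insert hnot, coeff_mul]
    rw [this]
    apply DifferentiableOn.fun_sum
    intro x _
    exact (hP a (Finset.mem_insert_self a t') x.1).mul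
      (ih (fun i hi k' => hP i (Finset.mem_insert_of_mem hi) k') x.2)

-- charpoly coeff differentiability
lemma LD2 {s : Set ℂ} {n : ℕ} (A : ℂ → Matrix (Fin n) (Fin n) ℂ)
    (hA : ∀ i j, DifferentiableOn ℂ (fun z => A z i j) s) (k : ℕ) :
    DifferentiableOn ℂ (fun z => (Matrix.charpoly (A z)).coeff k) s := by
  have hentry : ∀ (i j : Fin n) (k : ℕ),
      DifferentiableOn ℂ (fun z => ((Matrix.charmatrix (A z)) i j).coeff k) s := by
    intro i j k
    have : (fun z => ((Matrix.charmatrix (A z)) i j).coeff k)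
        = fun z => (Matrix.diagonal (fun _ : Fin n => (X : ℂ[X])) i j).coeff k
            - (if k = 0 then A z i j else 0) := by
      funext z
      rw [Matrix.charmatrix_apply, coeff_sub, coeff_C]
    rw [this]
    apply DifferentiableOn.const_sub
    by_cases hk : k = 0
    · simpa [hk] using hA i j
    · simp [hk]
  have : (fun z => (Matrix.charpoly (A z)).coeff k)
      = fun z => ∑ σ : Equiv.Perm (Fin n),
          (Equiv.Perm.sign σ : ℤ) • (∏ i, Matrix.charmatrix (A z) (σ i) i).coeff k := by
    funext z
    rw [Matrix.charpoly, Matrix.det_apply, finset_sum_coeff]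
    exact Finset.sum_congr rfl fun σ _ => by rw [coeff_smul]; simp [Units.smul_def]
  rw [this]
  apply DifferentiableOn.fun_sum
  intro σ _
  exact DifferentiableOn.const_smul (LD1 Finset.univ _ (fun i _ k => hentry (σ i) i k) k) _

-- entries of powers differentiable
lemma LD3 {s : Set ℂ} {n : ℕ} (A : ℂ → Matrix (Fin n) (Fin n) ℂ)
    (hA : ∀ i j, DifferentiableOn ℂ (fun z => A z i j) s) (m : ℕ) :
    ∀ i j, DifferentiableOn ℂ (fun z => ((A z) ^ m) i j) s := by
  induction m with
  | zero => intro i j; simpa using differentiableOn_const _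
  | succ m ih =>
    intro i j
    have : (fun z => ((A z) ^ (m+1)) i j) = fun z => ∑ l, ((A z) ^ m) i l * A z l j := by
      funext z
      rw [pow_succ, Matrix.mul_apply]
    rw [this]
    exact DifferentiableOn.fun_sum fun l _ => (ih i l).mul (hA l j)

-- coeff of comp with C c * X
lemma LC1 (p : ℂ[X]) (c : ℂ) (k : ℕ) : (p.comp (C c * X)).coeff k = c ^ k * p.coeff k := by
  induction p using Polynomial.induction_on' with
  | add p q hp hq => simp [add_comp, coeff_add, hp, hq, mul_add]
  | monomial e a =>
    rw [← C_mul_X_pow_eq_monomial, mul_comp, C_comp, X_pow_comp, mul_pow, ← C_pow]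
    rw [coeff_C_mul, coeff_C_mul, coeff_X_pow, coeff_C_mul, coeff_X_pow]
    by_cases h : k = e <;> simp [h, mul_comm]

-- charpoly of smul: comp identity
lemma LC2 {n : ℕ} (c : ℂ) (B : Matrix (Fin n) (Fin n) ℂ) :
    (Matrix.charpoly (c • B)).comp (C c * X) = C (c ^ n) * Matrix.charpoly B := by
  have hψ : ∀ q : ℂ[X], q.comp (C c * X) = (eval₂RingHom C (C c * X)) q := fun q => rfl
  rw [Matrix.charpoly, hψ, RingHom.map_det]
  have hmap : (Matrix.charmatrix (c • B)).map (eval₂RingHom C (C c * X))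
      = (C c) • Matrix.charmatrix B := by
    ext i j
    rw [Matrix.map_apply, Matrix.smul_apply, smul_eq_mul]
    by_cases h : i = j
    · subst h
      rw [Matrix.charmatrix_apply_eq, Matrix.charmatrix_apply_eq, Matrix.smul_apply,
        smul_eq_mul, coe_eval₂RingHom, eval₂_sub, eval₂_X, eval₂_C, mul_sub, ← C_mul]
    · rw [Matrix.charmatrix_apply_ne _ _ _ h, Matrix.charmatrix_apply_ne _ _ _ h,
        Matrix.smul_apply, smul_eq_mul, coe_eval₂RingHom, eval₂_neg, eval₂_C, mul_neg, ← C_mul]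
  rw [RingHom.mapMatrix_apply, hmap, Matrix.det_smul, ← C_pow, ← Matrix.charpoly]
  simp

lemma LC3 {n : ℕ} (c : ℂ) (hc : c ≠ 0) (B : Matrix (Fin n) (Fin n) ℂ) (k : ℕ) (hk : k ≤ n) :
    (Matrix.charpoly (c • B)).coeff k = c ^ (n - k) * (Matrix.charpoly B).coeff k := by
  have h := congrArg (fun p => p.coeff k) (LC2 c B)
  simp only [LC1, coeff_C_mul] at h
  have : c ^ n = c ^ (n - k) * c ^ k := by rw [← pow_add]; congr 1; omega
  rw [this, mul_assoc] at h
  have h' : c ^ k * (Matrix.charpoly (c • B)).coeff k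
      = c ^ k * (c ^ (n - k) * (Matrix.charpoly B).coeff k) := by linear_combination h
  exact mul_left_cancel₀ (pow_ne_zero k hc) h'

lemma LB0 (t : Multiset ℂ) (h : ∀ x ∈ t, ‖x‖ ≤ 1) : ‖t.prod‖ ≤ 1 := by
  induction t using Multiset.induction_on with
  | empty => simp
  | cons a t ih =>
    rw [Multiset.prod_cons, norm_mul]
    have ha := h a (Multiset.mem_cons_self a t)
    have ht := ih fun x hx => h x (Multiset.mem_cons_of_mem hx)
    calc ‖a‖ * ‖t.prod‖ ≤ 1 * 1 := by
          apply mul_le_mul ha ht (norm_nonneg _) zero_le_one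
      _ = 1 := by norm_num

lemma LB {n : ℕ} [NeZero n] (A : Matrix (Fin n) (Fin n) ℂ)
    (hsp : ∀ μ ∈ spectrum ℂ A, ‖μ‖ ≤ 1) (k : ℕ) (hk : k ≤ n) :
    ‖(Matrix.charpoly A).coeff k‖ ≤ 2 ^ n := by
  have hmono := Matrix.charpoly_monic A
  have hdeg : (Matrix.charpoly A).natDegree = n := by
    rw [Matrix.charpoly_natDegree_eq_dim, Fintype.card_fin]
  have hsplit : (Matrix.charpoly A).Splits := IsAlgClosed.splits _
  have hcard : Multiset.card (Matrix.charpoly A).roots = n := by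
    have := splits_iff_card_roots.mp hsplit
    rw [hdeg] at this
    exact this
  have hroots : ∀ r ∈ (Matrix.charpoly A).roots, ‖r‖ ≤ 1 := by
    intro r hr
    have : (Matrix.charpoly A).IsRoot r := isRoot_of_mem_roots hr
    have : r ∈ spectrum ℂ A := by
      rw [spectrum.mem_iff, Matrix.isUnit_iff_isUnit_det, isUnit_iff_ne_zero, not_not]
      have hev : (Matrix.charpoly A).eval r = Matrix.det (algebraMap ℂ _ r - A) := by
        rw [Matrix.charpoly, eval_det, Matrix.matPolyEquiv_charmatrix]
        have : (Polynomial.eval (Matrix.scalar (Fin n) r) (X - C A)) = algebraMap ℂ _ r - A := by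
          simp only [eval_sub, eval_X, eval_C]
          congr 1
        rw [this]
      rw [← hev]
      exact this
    exact hsp r this
  conv_lhs => rw [hsplit.eq_prod_roots_of_monic hmono]
  rw [Multiset.prod_X_sub_C_coeff _ (le_of_le_of_eq hk hcard.symm)]
  rw [norm_mul, norm_pow, norm_neg, norm_one, one_pow, one_mul]
  unfold Multiset.esymm
  calc ‖((Matrix.charpoly A).roots.powersetCard (Multiset.card (Matrix.charpoly A).roots - k)).map
          Multiset.prod |>.sum‖
      ≤ (((Matrix.charpoly A).roots.powersetCard (Multiset.card (Matrix.charpoly A).roots - k)).map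
          (fun t => ‖Multiset.prod t‖)).sum := by
        simpa [Multiset.map_map] using norm_multiset_sum_le
          (((Matrix.charpoly A).roots.powersetCard
            (Multiset.card (Matrix.charpoly A).roots - k)).map Multiset.prod)
    _ ≤ 2 ^ n := by
        have hbd : ∀ x ∈ ((Matrix.charpoly A).roots.powersetCard
            (Multiset.card (Matrix.charpoly A).roots - k)).map (fun t => ‖Multiset.prod t‖),
            x ≤ 1 := by
          rintro x hx
          obtain ⟨t, ht, rfl⟩ := Multiset.mem_map.mp hx
          have hle := (Multiset.mem_powersetCard.mp ht).1
          exact LB0 t fun y hy => hroots y (Multiset.mem_of_le hle hy)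
        calc _ ≤ (Multiset.card (((Matrix.charpoly A).roots.powersetCard
                (Multiset.card (Matrix.charpoly A).roots - k)).map (fun t => ‖Multiset.prod t‖)))
                • (1:ℝ) := Multiset.sum_le_card_nsmul _ _ hbd
          _ ≤ 2 ^ n := by
              rw [Multiset.card_map, Multiset.card_powersetCard, hcard]
              simp only [nsmul_eq_mul, mul_one]
              have hch : n.choose (n - k) ≤ 2 ^ n := by
                rw [← Nat.sum_range_choose n]
                exact Finset.single_le_sum (fun i _ => Nat.zero_le _)
                  (Finset.mem_range.mpr (by omega))
              calc (↑(n.choose (n - k)) : ℝ) ≤ ↑(2 ^ n : ℕ) := by exact_mod_cast hch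
                _ = 2 ^ n := by push_cast; ring

lemma spectralSchwarz {n : ℕ} [NeZero n] (G : ℂ → Matrix (Fin n) (Fin n) ℂ)
    (hd : ∀ i j, DifferentiableOn ℂ (fun z => G z i j) (ball (0:ℂ) 1))
    (h0 : G 0 = 0)
    (hsp : ∀ z ∈ ball (0:ℂ) 1, ∀ μ ∈ spectrum ℂ (G z), ‖μ‖ ≤ 1) :
    ∀ z₀ ∈ ball (0:ℂ) 1, ∀ lam ∈ spectrum ℂ (G z₀), ‖lam‖ ≤ ‖z₀‖ := by
  intro z₀ hz₀ lam hlam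
  by_contra hcon
  push_neg at hcon
  -- z₀ ≠ 0
  have hz₀ne : z₀ ≠ 0 := by
    rintro rfl
    rw [h0, spectrum.zero_eq] at hlam
    simp only [Set.mem_singleton_iff] at hlam
    subst hlam
    simp at hcon
  have hlampos : (0:ℝ) < ‖lam‖ := lt_of_le_of_lt (norm_nonneg _) hcon
  set q : ℝ := ‖z₀‖ / ‖lam‖ with hq
  have hq0 : 0 ≤ q := by positivity
  have hq1 : q < 1 := (div_lt_one hlampos).mpr hcon
  -- pick m
  have htend : Filter.Tendsto (fun m : ℕ => (n:ℝ) * 2 ^ n * q ^ m) Filter.atTop (nhds 0) := by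
    simpa using (tendsto_pow_atTop_nhds_zero_of_lt_one hq0 hq1).const_mul ((n:ℝ) * 2 ^ n)
  have hev : ∀ᶠ m : ℕ in Filter.atTop, (n:ℝ) * 2 ^ n * q ^ m < 1 :=
    htend.eventually_lt_const one_pos
  obtain ⟨m, hm1, hmq⟩ : ∃ m : ℕ, 1 ≤ m ∧ (n:ℝ) * 2 ^ n * q ^ m < 1 := by
    obtain ⟨m, hm⟩ := (hev.and (Filter.eventually_ge_atTop 1)).exists
    exact ⟨m, hm.2, hm.1⟩
  -- slope matrix
  set K : ℂ → Matrix (Fin n) (Fin n) ℂ :=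
    fun z => Matrix.of fun i j => dslope (fun w => G w i j) 0 z with hKdef
  have hKd : ∀ i j, DifferentiableOn ℂ (fun z => K z i j) (ball (0:ℂ) 1) := by
    intro i j
    exact (Complex.differentiableOn_dslope
      (isOpen_ball.mem_nhds (mem_ball_self one_pos))).mpr (hd i j)
  have hGK : ∀ z, G z = z • K z := by
    intro z
    ext i j
    rcases eq_or_ne z 0 with rfl | hz
    · simp [h0]
    · simp only [Matrix.smul_apply, hKdef, Matrix.of_apply, smul_eq_mul]
      rw [dslope_of_ne _ hz, slope_def_field]
      have : G 0 i j = 0 := by rw [h0]; rfl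
      rw [this]
      field_simp
      ring
  -- spectrum bound for powers
  have hsppow : ∀ z ∈ ball (0:ℂ) 1, ∀ μ ∈ spectrum ℂ ((G z) ^ m), ‖μ‖ ≤ 1 := by
    intro z hz μ hμ
    rw [spectrum.map_pow_of_pos _ (by omega : 0 < m)] at hμ
    obtain ⟨ν, hν, rfl⟩ := hμ
    rw [norm_pow]
    exact pow_le_one₀ (norm_nonneg _) (hsp z hz ν hν)
  -- coefficient bound at z₀
  have hcoeff : ∀ k, k < n →
      ‖(Matrix.charpoly ((G z₀) ^ m)).coeff k‖ ≤ 2 ^ n * ‖z₀‖ ^ (m * (n - k)) := by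
    intro k hk
    set hk' : ℂ → ℂ := fun z => (Matrix.charpoly ((K z) ^ m)).coeff k with hkdef
    have hdk : DifferentiableOn ℂ hk' (ball (0:ℂ) 1) :=
      LD2 (fun z => (K z) ^ m) (LD3 K hKd m) k
    have hfact : ∀ z : ℂ, z ≠ 0 →
        (Matrix.charpoly ((G z) ^ m)).coeff k = (z ^ m) ^ (n - k) * hk' z := by
      intro z hz
      have h1 : (G z) ^ m = (z ^ m) • (K z) ^ m := by
        rw [hGK z, _root_.smul_pow]
      rw [h1, LC3 (z ^ m) (pow_ne_zero m hz) ((K z) ^ m) k (le_of_lt hk), ← pow_mul, pow_mul]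
    have hbound : ∀ z ∈ ball (0:ℂ) 1, ‖z ^ (m * (n - k)) * hk' z‖ ≤ 2 ^ n := by
      intro z hz
      rcases eq_or_ne z 0 with rfl | hzne
      · have : m * (n - k) ≠ 0 := by
          have : 0 < n - k := by omega
          positivity
        rw [zero_pow this, zero_mul, norm_zero]
        positivity
      · rw [pow_mul, ← hfact z hzne]
        exact LB ((G z) ^ m) (hsppow z hz) k (le_of_lt hk)
    have hk2 : ‖hk' z₀‖ ≤ 2 ^ n := LA hdk (m * (n - k)) (2 ^ n) hbound z₀ hz₀
    rw [hfact z₀ hz₀ne, norm_mul, norm_pow, norm_pow, ← pow_mul]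
    calc ‖z₀‖ ^ (m * (n - k)) * ‖hk' z₀‖ ≤ ‖z₀‖ ^ (m * (n - k)) * 2 ^ n := by
          apply mul_le_mul_of_nonneg_left hk2 (by positivity)
      _ = 2 ^ n * ‖z₀‖ ^ (m * (n - k)) := by ring
  -- lam^m is a root of charpoly of (G z₀)^m
  set B := (G z₀) ^ m with hB
  have hmemB : lam ^ m ∈ spectrum ℂ B :=
    spectrum.pow_image_subset (G z₀) m (Set.mem_image_of_mem _ hlam)
  have hrootB : (Matrix.charpoly B).eval (lam ^ m) = 0 := (L2 B (lam ^ m)).mp hmemB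
  have hdegB : (Matrix.charpoly B).natDegree = n := by
    rw [Matrix.charpoly_natDegree_eq_dim, Fintype.card_fin]
  have hmonoB := Matrix.charpoly_monic B
  have hsum : (lam ^ m) ^ n
      = -∑ i ∈ Finset.range n, (Matrix.charpoly B).coeff i * (lam ^ m) ^ i := by
    have hcn : (Matrix.charpoly B).coeff n = 1 := by
      have := hmonoB.coeff_natDegree
      rwa [hdegB] at this
    rw [eval_eq_sum_range, hdegB, Finset.sum_range_succ, hcn, one_mul] at hrootB
    linear_combination hrootB
  -- norms
  set L : ℝ := ‖lam‖ with hL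
  set r : ℝ := ‖z₀‖ with hr
  have hrqL : r = q * L := by
    rw [hq]
    field_simp
  have hnorm : L ^ (m * n) ≤ ∑ i ∈ Finset.range n, ‖(Matrix.charpoly B).coeff i‖ * L ^ (m * i) := by
    have h1 : ‖(lam ^ m) ^ n‖ = L ^ (m * n) := by
      rw [norm_pow, norm_pow, ← pow_mul]
    calc L ^ (m * n) = ‖(lam ^ m) ^ n‖ := h1.symm
      _ = ‖∑ i ∈ Finset.range n, (Matrix.charpoly B).coeff i * (lam ^ m) ^ i‖ := by
          rw [hsum, norm_neg]
      _ ≤ ∑ i ∈ Finset.range n, ‖(Matrix.charpoly B).coeff i * (lam ^ m) ^ i‖ :=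
          norm_sum_le _ _
      _ = ∑ i ∈ Finset.range n, ‖(Matrix.charpoly B).coeff i‖ * L ^ (m * i) := by
          apply Finset.sum_congr rfl
          intro i _
          rw [norm_mul, norm_pow, norm_pow, ← pow_mul]
  have hterm : ∀ i ∈ Finset.range n,
      ‖(Matrix.charpoly B).coeff i‖ * L ^ (m * i) ≤ 2 ^ n * q ^ m * L ^ (m * n) := by
    intro i hi
    rw [Finset.mem_range] at hi
    have hc := hcoeff i hi
    have hLpow : (0:ℝ) ≤ L ^ (m * i) := by positivity
    calc ‖(Matrix.charpoly B).coeff i‖ * L ^ (m * i)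
        ≤ (2 ^ n * r ^ (m * (n - i))) * L ^ (m * i) := mul_le_mul_of_nonneg_right hc hLpow
      _ = 2 ^ n * q ^ (m * (n - i)) * (L ^ (m * (n - i)) * L ^ (m * i)) := by
          rw [hrqL, mul_pow]; ring
      _ = 2 ^ n * q ^ (m * (n - i)) * L ^ (m * n) := by
          rw [← pow_add, ← Nat.mul_add]
          have hni : n - i + i = n := by omega
          rw [hni]
      _ ≤ 2 ^ n * q ^ m * L ^ (m * n) := by
          apply mul_le_mul_of_nonneg_right _ (by positivity)
          apply mul_le_mul_of_nonneg_left _ (by positivity)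
          apply pow_le_pow_of_le_one hq0 hq1.le
          have : 1 ≤ n - i := by omega
          calc m = m * 1 := (mul_one m).symm
            _ ≤ m * (n - i) := Nat.mul_le_mul_left m this
  have hfinal : L ^ (m * n) ≤ (n:ℝ) * (2 ^ n * q ^ m * L ^ (m * n)) := by
    calc L ^ (m * n) ≤ ∑ i ∈ Finset.range n, ‖(Matrix.charpoly B).coeff i‖ * L ^ (m * i) := hnorm
      _ ≤ ∑ i ∈ Finset.range n, 2 ^ n * q ^ m * L ^ (m * n) := Finset.sum_le_sum hterm
      _ = (n:ℝ) * (2 ^ n * q ^ m * L ^ (m * n)) := by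
          rw [Finset.sum_const, Finset.card_range, nsmul_eq_mul]
  have hLpos : (0:ℝ) < L ^ (m * n) := by positivity
  have h1le : (1:ℝ) ≤ (n:ℝ) * 2 ^ n * q ^ m := by
    have h2 : (1:ℝ) * L ^ (m * n) ≤ ((n:ℝ) * 2 ^ n * q ^ m) * L ^ (m * n) := by
      rw [one_mul]
      calc L ^ (m * n) ≤ (n:ℝ) * (2 ^ n * q ^ m * L ^ (m * n)) := hfinal
        _ = ((n:ℝ) * 2 ^ n * q ^ m) * L ^ (m * n) := by ring
    exact le_of_mul_le_mul_right (by linarith [h2]) hLpos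
  linarith [h1le, hmq]

-- Möbius machinery
lemma mob_ne (a z : ℂ) (ha : ‖a‖ < 1) (hz : ‖z‖ < 1) : 1 + (starRingEnd ℂ a) * z ≠ 0 := by
  intro h
  have h1 : ‖(starRingEnd ℂ a) * z‖ < 1 := by
    rw [norm_mul, RCLike.norm_conj]
    nlinarith [norm_nonneg a, norm_nonneg z]
  have h2 : (starRingEnd ℂ a) * z = -1 := by linear_combination h
  rw [h2, norm_neg, norm_one] at h1
  exact lt_irrefl _ h1

lemma mob_maps (a z : ℂ) (ha : ‖a‖ < 1) (hz : ‖z‖ < 1) :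
    ‖(z + a) / (1 + (starRingEnd ℂ a) * z)‖ < 1 := by
  rw [norm_div, div_lt_one (by
    rcases (norm_nonneg (1 + (starRingEnd ℂ a) * z)).lt_or_eq with h | h
    · exact h
    · exact absurd (norm_eq_zero.mp h.symm) (mob_ne a z ha hz))]
  have hid := L1 a z
  have hna : Complex.normSq a < 1 := by
    rw [Complex.normSq_eq_norm_sq]
    nlinarith [norm_nonneg a]
  have hnz : Complex.normSq z < 1 := by
    rw [Complex.normSq_eq_norm_sq]
    nlinarith [norm_nonneg z]
  have hlt : Complex.normSq (a + z) < Complex.normSq (1 + (starRingEnd ℂ a) * z) := by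
    nlinarith [hid]
  apply lt_of_pow_lt_pow_left₀ 2 (norm_nonneg _)
  rw [← Complex.sq_norm, ← Complex.sq_norm] at hlt
  rw [show z + a = a + z by ring]
  exact hlt

end Aux


/-- The spectral radius of a complex `n × n` matrix. -/
noncomputable def sRad {n : ℕ} (A : Matrix (Fin n) (Fin n) ℂ) : ℝ :=
  sSup ((fun μ => ‖μ‖) '' spectrum ℂ A)

/-- The pseudo-hyperbolic distance from `μ` to a set `K ⊆ 𝔻`. -/
noncomputable def distM (μ : ℂ) (K : Set ℂ) : ℝ :=
  sInf ((fun z => ‖(μ - z) / (1 - (starRingEnd ℂ z) * μ)‖) '' K)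

/-- Theorem 1 recovers Globevnik's lemma: if `W₁ = F(ζ₁) = 0` then `d₁ = 1`, the
left-hand side of the two-sided Schwarz inequality equals `r(W₂)`, and consequently
`r(W₂) ≤ |(ζ₁ - ζ₂)/(1 - conj(ζ₁)ζ₂)|`. -/
theorem stmt12 {n : ℕ} (hn : 2 ≤ n) (F : ℂ → Matrix (Fin n) (Fin n) ℂ)
    (hol : ∀ i j : Fin n, DifferentiableOn ℂ (fun ζ => F ζ i j) (ball (0 : ℂ) 1))
    (hmap : ∀ ζ ∈ ball (0 : ℂ) 1, sRad (F ζ) < 1)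
    (ζ₁ ζ₂ : ℂ) (hζ₁ : ζ₁ ∈ ball (0 : ℂ) 1) (hζ₂ : ζ₂ ∈ ball (0 : ℂ) 1)
    (hF0 : F ζ₁ = 0) :
    (minpoly ℂ (F ζ₁)).natDegree = 1 ∧
    max
      (sSup ((fun μ =>
        distM μ (spectrum ℂ (F ζ₁)) ^ (minpoly ℂ (F ζ₁)).natDegree) '' spectrum ℂ (F ζ₂)))
      (sSup ((fun lam =>
        distM lam (spectrum ℂ (F ζ₂)) ^ (minpoly ℂ (F ζ₂)).natDegree) '' spectrum ℂ (F ζ₁)))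
      = sRad (F ζ₂) ∧
    sRad (F ζ₂) ≤ ‖(ζ₁ - ζ₂) / (1 - (starRingEnd ℂ ζ₁) * ζ₂)‖ := by
  haveI : NeZero n := ⟨by omega⟩
  rw [mem_ball_zero_iff] at hζ₁ hζ₂
  -- Part 1
  have hd1 : (minpoly ℂ (F ζ₁)).natDegree = 1 := by
    rw [hF0]
    have h : (0 : Matrix (Fin n) (Fin n) ℂ) = algebraMap ℂ _ 0 := by simp
    rw [h, minpoly.eq_X_sub_C]
    simp
  have hsp1 : spectrum ℂ (F ζ₁) = {0} := by rw [hF0]; exact spectrum.zero_eq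
  -- Part 3 (Schwarz) first
  set φ : ℂ → ℂ := fun z => (z + ζ₁) / (1 + (starRingEnd ℂ ζ₁) * z) with hφdef
  have hφmaps : ∀ z ∈ ball (0:ℂ) 1, φ z ∈ ball (0:ℂ) 1 := by
    intro z hz
    rw [mem_ball_zero_iff] at hz ⊢
    exact mob_maps ζ₁ z hζ₁ hz
  have hφdiff : DifferentiableOn ℂ φ (ball (0:ℂ) 1) := by
    apply DifferentiableOn.div
    · exact (differentiableOn_id).add_const ζ₁
    · exact (differentiableOn_const _).add ((differentiableOn_const _).mul differentiableOn_id)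
    · intro z hz
      rw [mem_ball_zero_iff] at hz
      exact mob_ne ζ₁ z hζ₁ hz
  have hφ0 : φ 0 = ζ₁ := by simp [hφdef]
  set D : ℂ := 1 - (starRingEnd ℂ ζ₁) * ζ₂ with hDdef
  have hDne : D ≠ 0 := by
    have := mob_ne (-ζ₁) ζ₂ (by rwa [norm_neg]) hζ₂
    rw [map_neg] at this
    intro h
    apply this
    rw [hDdef] at h
    linear_combination h
  set w : ℂ := (ζ₂ - ζ₁) / D with hwdef
  have hwball : ‖w‖ < 1 := by
    have := mob_maps (-ζ₁) ζ₂ (by rwa [norm_neg]) hζ₂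
    rw [map_neg] at this
    have heq : (ζ₂ + -ζ₁) / (1 + -(starRingEnd ℂ ζ₁) * ζ₂) = w := by
      rw [hwdef, hDdef]
      ring_nf
    rwa [heq] at this
  have hφw : φ w = ζ₂ := by
    have hden : 1 + (starRingEnd ℂ ζ₁) * w ≠ 0 := mob_ne ζ₁ w hζ₁ hwball
    rw [hφdef]
    show (w + ζ₁) / (1 + (starRingEnd ℂ ζ₁) * w) = ζ₂
    rw [div_eq_iff hden, hwdef]
    field_simp
    ring
  set G : ℂ → Matrix (Fin n) (Fin n) ℂ := fun z => F (φ z) with hGdef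
  have hGd : ∀ i j, DifferentiableOn ℂ (fun z => G z i j) (ball (0:ℂ) 1) :=
    fun i j => (hol i j).comp hφdiff hφmaps
  have hG0 : G 0 = 0 := by rw [hGdef]; simp only; rw [hφ0, hF0]
  have hGsp : ∀ z ∈ ball (0:ℂ) 1, ∀ μ ∈ spectrum ℂ (G z), ‖μ‖ ≤ 1 := by
    intro z hz μ hμ
    have hfin : ((fun μ : ℂ => ‖μ‖) '' spectrum ℂ (G z)).Finite :=
      Set.Finite.image _ (L3 (G z))
    have hb : ‖μ‖ ≤ sRad (G z) := le_csSup hfin.bddAbove (Set.mem_image_of_mem _ hμ)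
    exact hb.trans (hmap (φ z) (hφmaps z hz)).le
  have hkey := spectralSchwarz G hGd hG0 hGsp w (mem_ball_zero_iff.mpr hwball)
  have hGw : G w = F ζ₂ := by rw [hGdef]; simp only; rw [hφw]
  have hpart3 : sRad (F ζ₂) ≤ ‖(ζ₁ - ζ₂) / D‖ := by
    have h1 : ‖(ζ₁ - ζ₂) / D‖ = ‖w‖ := by
      rw [hwdef, show ζ₁ - ζ₂ = -(ζ₂ - ζ₁) by ring, neg_div, norm_neg]
    rw [h1, sRad]
    apply Real.sSup_le
    · rintro x ⟨μ, hμ, rfl⟩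
      rw [← hGw] at hμ
      exact hkey μ hμ
    · exact norm_nonneg w
  -- Part 2
  set S : Set ℝ := (fun μ : ℂ => ‖μ‖) '' spectrum ℂ (F ζ₂) with hS
  have hSne : S.Nonempty :=
    (spectrum.nonempty_of_isAlgClosed_of_finiteDimensional ℂ (F ζ₂)).image _
  have hSfin : S.Finite := Set.Finite.image _ (L3 (F ζ₂))
  have hSbdd : BddAbove S := hSfin.bddAbove
  have hSbddb : BddBelow S := by
    refine ⟨0, ?_⟩
    rintro x ⟨μ, _, rfl⟩
    exact norm_nonneg μ
  have hsradS : sRad (F ζ₂) = sSup S := rfl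
  have hterm1 : ((fun μ =>
      distM μ (spectrum ℂ (F ζ₁)) ^ (minpoly ℂ (F ζ₁)).natDegree) '' spectrum ℂ (F ζ₂)) = S := by
    rw [hS]
    apply Set.image_congr
    intro μ _
    rw [hd1, pow_one, hsp1, distM, Set.image_singleton, csInf_singleton]
    simp
  have hterm2val : distM 0 (spectrum ℂ (F ζ₂)) = sInf S := by
    rw [distM, hS]
    congr 1
    apply Set.image_congr
    intro z _
    simp
  have hterm2 : ((fun lam =>
      distM lam (spectrum ℂ (F ζ₂)) ^ (minpoly ℂ (F ζ₂)).natDegree) '' spectrum ℂ (F ζ₁))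
      = {(sInf S) ^ (minpoly ℂ (F ζ₂)).natDegree} := by
    rw [hsp1, Set.image_singleton, hterm2val]
  have hd2pos : 1 ≤ (minpoly ℂ (F ζ₂)).natDegree :=
    minpoly.natDegree_pos (IsIntegral.of_finite ℂ (F ζ₂))
  have hInf0 : 0 ≤ sInf S := by
    apply Real.sInf_nonneg
    rintro x ⟨μ, _, rfl⟩
    exact norm_nonneg μ
  have hIle : sInf S ≤ sSup S := csInf_le_csSup hSne hSbddb hSbdd
  have hS1 : sSup S < 1 := by
    rw [← hsradS]
    exact hmap ζ₂ (mem_ball_zero_iff.mpr hζ₂)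
  have hle2 : (sInf S) ^ (minpoly ℂ (F ζ₂)).natDegree ≤ sSup S := by
    calc (sInf S) ^ (minpoly ℂ (F ζ₂)).natDegree ≤ (sInf S) ^ 1 :=
          pow_le_pow_of_le_one hInf0 (le_trans hIle hS1.le) hd2pos
      _ = sInf S := pow_one _
      _ ≤ sSup S := hIle
  refine ⟨hd1, ?_, hpart3⟩
  rw [hterm1, hterm2, csSup_singleton, hsradS]
  exact max_eq_left hle2
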